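/- Let H₀, H₁, H₂ be open hemispheres of Sⁿ (n ≥ 2) with defining unit-norm linear functionals ℓ₀, ℓ₁, ℓ₂, such that H₁ and H₂ are not antipodal (ℓ₂ ≠ -ℓ₁). If H₀ ∩ (H₁ ∪ H₂) is not connected, then for all sufficiently small ε > 0 the set H₀^ε ∩ (H₁ ∪ H₂) is connected, where H₀^ε = {x ∈ Sⁿ : ℓ₀(x) > -ε}. -/

import Mathlib

open Module

variable {E : Type*} [NormedAddCommGroup E] [InnerProductSpace ℝ E]

local notation "⟪" x ", " y "⟫" => @inner ℝ _ _ x y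

noncomputable def nseg (x y : E) (t : ℝ) : E := (1 - t) • x + t • y

lemma nseg_inner (v x y : E) (t : ℝ) : ⟪v, nseg x y t⟫ = (1 - t) * ⟪v, x⟫ + t * ⟪v, y⟫ := by
  simp [nseg, inner_add_right, real_inner_smul_right]

lemma nseg_norm_le {x y : E} (hx : ‖x‖ = 1) (hy : ‖y‖ = 1) {t : ℝ}
    (ht : t ∈ Set.Icc (0:ℝ) 1) : ‖nseg x y t‖ ≤ 1 := by
  calc ‖nseg x y t‖ ≤ ‖(1-t)•x‖ + ‖t•y‖ := norm_add_le _ _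
  _ = |1-t| * 1 + |t| * 1 := by rw [norm_smul, norm_smul, hx, hy]; rfl
  _ = 1 := by rw [abs_of_nonneg (by linarith [ht.2]), abs_of_nonneg ht.1]; ring

lemma nseg_norm_ge {x y : E} (w : E) (hw : ‖w‖ = 1) (t : ℝ) :
    ⟪w, nseg x y t⟫ ≤ ‖nseg x y t‖ := by
  simpa [hw] using real_inner_le_norm w (nseg x y t)

lemma joinedIn_of_nseg {W : Set E} {x y : E} (hx : ‖x‖ = 1) (hy : ‖y‖ = 1)
    (h : ∀ t ∈ Set.Icc (0:ℝ) 1, nseg x y t ≠ 0 ∧ ‖nseg x y t‖⁻¹ • nseg x y t ∈ W) :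
    JoinedIn W x y := by
  have hc : Continuous fun t : unitInterval => ‖nseg x y (t:ℝ)‖⁻¹ • nseg x y (t:ℝ) := by
    have hzc : Continuous fun t : unitInterval => nseg x y (t:ℝ) := by
      unfold nseg; fun_prop
    exact ((hzc.norm.inv₀ (fun t => by
      simpa using (norm_ne_zero_iff.2 (h t t.2).1))).smul hzc)
  refine ⟨⟨⟨fun t => ‖nseg x y (t:ℝ)‖⁻¹ • nseg x y (t:ℝ), hc⟩, ?_, ?_⟩, fun t => (h t t.2).2⟩
  · simp [nseg, hx]
  · simp [nseg, hy]

lemma nseg_norm_sq {x y : E} (hx : ‖x‖ = 1) (hy : ‖y‖ = 1) (t : ℝ) :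
    ‖nseg x y t‖^2 = (1-t)^2 + t^2 + 2*t*(1-t)*⟪x, y⟫ := by
  have := norm_add_sq_real ((1-t)•x) (t•y)
  simp only [nseg, norm_smul, real_inner_smul_left, real_inner_smul_right] at this ⊢
  rw [this, hx, hy]
  simp only [Real.norm_eq_abs, mul_pow, sq_abs]
  ring

/-- a unit vector orthogonal to two given vectors -/
lemma exists_unit_orthog [FiniteDimensional ℝ E] (hdim : 3 ≤ finrank ℝ E) (p q : E) :
    ∃ u : E, ‖u‖ = 1 ∧ ⟪p, u⟫ = 0 ∧ ⟪q, u⟫ = 0 := by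
  classical
  set K : Submodule ℝ E := Submodule.span ℝ (({p, q} : Finset E) : Set E) with hK
  have hKfr : finrank ℝ K ≤ 2 := by
    refine le_trans (finrank_span_finset_le_card (R:=ℝ) _) ?_
    exact le_trans (Finset.card_insert_le _ _) (by simp)
  have hKne : K ≠ ⊤ := by
    intro h
    rw [h, finrank_top] at hKfr
    omega
  have : Kᗮ ≠ ⊥ := fun h => hKne (Submodule.orthogonal_eq_bot_iff.1 h)
  obtain ⟨u₀, hu₀K, hu₀⟩ := Submodule.exists_mem_ne_zero_of_ne_bot this
  refine ⟨‖u₀‖⁻¹ • u₀, norm_smul_inv_norm hu₀, ?_, ?_⟩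
  · have h0 := hu₀K p (Submodule.subset_span (by simp))
    rw [real_inner_smul_right, h0, mul_zero]
  · have h0 := hu₀K q (Submodule.subset_span (by simp))
    rw [real_inner_smul_right, h0, mul_zero]

lemma convex_pos {a b t : ℝ} (h0 : 0 ≤ t) (h1 : t ≤ 1) (ha : 0 < a) (hb : 0 < b) :
    0 < (1 - t) * a + t * b := by
  rcases lt_or_ge t 1 with h | h
  · nlinarith [mul_pos (by linarith : (0:ℝ) < 1 - t) ha, mul_nonneg h0 hb.le]
  · have : t = 1 := le_antisymm h1 h
    subst this; simpa using hb

variable (v₀ v₁ : E) (ε : ℝ)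

/-- the thickened-cap ∩ hemisphere set -/
def Wset : Set E := {x : E | ‖x‖ = 1 ∧ -ε < ⟪v₀, x⟫ ∧ 0 < ⟪v₁, x⟫}

variable {v₀ v₁ ε}

lemma mem_Wset_of_nseg (hε : 0 < ε) {x y : E} (hx : ‖x‖ = 1) (hy : ‖y‖ = 1)
    {t : ℝ} (ht : t ∈ Set.Icc (0:ℝ) 1)
    (h0 : 0 < ‖nseg x y t‖ → -ε * ‖nseg x y t‖ < (1 - t) * ⟪v₀, x⟫ + t * ⟪v₀, y⟫)
    (h1 : 0 < (1 - t) * ⟪v₁, x⟫ + t * ⟪v₁, y⟫) :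
    nseg x y t ≠ 0 ∧ ‖nseg x y t‖⁻¹ • nseg x y t ∈ Wset v₀ v₁ ε := by
  have hinner1 : 0 < ⟪v₁, nseg x y t⟫ := by rw [nseg_inner]; exact h1
  have hz : nseg x y t ≠ 0 := by
    intro h; rw [h, inner_zero_right] at hinner1; exact lt_irrefl 0 hinner1
  have hr : 0 < ‖nseg x y t‖ := norm_pos_iff.2 hz
  refine ⟨hz, norm_smul_inv_norm hz, ?_, ?_⟩
  · rw [real_inner_smul_right, nseg_inner, inv_mul_eq_div, lt_div_iff₀ hr,
      neg_mul]
    have := h0 hr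
    linarith [this]
  · rw [real_inner_smul_right, nseg_inner]
    positivity

/-- conic hop : both endpoints have nonneg v₀-value and positive v₁-value -/
lemma hopH1 (hε : 0 < ε) {x y : E} (hx : ‖x‖ = 1) (hy : ‖y‖ = 1)
    (ha₀ : 0 ≤ ⟪v₀, x⟫) (hb₀ : 0 ≤ ⟪v₀, y⟫) (ha₁ : 0 < ⟪v₁, x⟫) (hb₁ : 0 < ⟪v₁, y⟫) :
    JoinedIn (Wset v₀ v₁ ε) x y := by
  refine joinedIn_of_nseg hx hy (fun t ht => mem_Wset_of_nseg hε hx hy ht (fun hr => ?_) ?_)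
  · obtain ⟨ht0, ht1⟩ := Set.mem_Icc.mp ht
    nlinarith [mul_pos hε hr, mul_nonneg (by linarith : (0:ℝ) ≤ 1 - t) ha₀,
      mul_nonneg ht0 hb₀]
  · obtain ⟨ht0, ht1⟩ := Set.mem_Icc.mp ht
    exact convex_pos ht0 ht1 ha₁ hb₁

/-- descent hop : from a point with possibly negative v₀-value to one with
nonneg v₀-value, provided the endpoints subtend an acute angle -/
lemma hopH2a (hε : 0 < ε) {x y : E} (hx : ‖x‖ = 1) (hy : ‖y‖ = 1)
    (ha₀ : -ε < ⟪v₀, x⟫) (hb₀ : 0 ≤ ⟪v₀, y⟫) (ha₁ : 0 < ⟪v₁, x⟫) (hb₁ : 0 < ⟪v₁, y⟫)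
    (hγ : 0 ≤ ⟪x, y⟫) :
    JoinedIn (Wset v₀ v₁ ε) x y := by
  refine joinedIn_of_nseg hx hy (fun t ht => mem_Wset_of_nseg hε hx hy ht (fun hr => ?_) ?_)
  · obtain ⟨ht0, ht1⟩ := Set.mem_Icc.mp ht
    have hrx : (1 - t) * 1 + t * ⟪x, y⟫ ≤ ‖nseg x y t‖ := by
      have := nseg_norm_ge (x := x) (y := y) x hx t
      rwa [nseg_inner, real_inner_self_eq_norm_mul_norm, hx, one_mul] at this
    rcases le_or_gt 0 ((1 - t) * ⟪v₀, x⟫ + t * ⟪v₀, y⟫) with h | h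
    · nlinarith [mul_pos hε hr]
    · have ht1' : t < 1 := by
        rcases lt_or_ge t 1 with h' | h'
        · exact h'
        · exfalso
          have : t = 1 := le_antisymm ht1 h'
          subst this; simp at h; linarith
      have h2 : ε * ((1 - t) * 1 + t * ⟪x, y⟫) ≤ ε * ‖nseg x y t‖ :=
        mul_le_mul_of_nonneg_left hrx hε.le
      nlinarith [mul_nonneg (mul_nonneg hε.le ht0) hγ,
        mul_lt_mul_of_pos_left ha₀ (show (0:ℝ) < 1 - t by linarith),
        mul_nonneg ht0 hb₀]
  · obtain ⟨ht0, ht1⟩ := Set.mem_Icc.mp ht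
    exact convex_pos ht0 ht1 ha₁ hb₁

lemma norm_add_unit_orthog {x u : E} (hx : ‖x‖ = 1) (hu : ‖u‖ = 1) (hxu : ⟪x, u⟫ = 0) :
    ‖x + u‖ ^ 2 = 2 ∧ 1 < ‖x + u‖ := by
  have h := norm_add_sq_real x u
  rw [hx, hxu] at h
  rw [hu] at h
  have h2 : ‖x + u‖ ^ 2 = 2 := by rw [h]; ring
  refine ⟨h2, ?_⟩
  nlinarith [norm_nonneg (x + u)]

/-- bridge hop : move towards a direction orthogonal to everything -/
lemma hopH2b (hε : 0 < ε) {x u : E} (hx : ‖x‖ = 1) (hu : ‖u‖ = 1)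
    (hxu : ⟪x, u⟫ = 0) (h0u : ⟪v₀, u⟫ = 0) (h1u : ⟪v₁, u⟫ = 0)
    (ha₀ : -ε < ⟪v₀, x⟫) (ha₁ : 0 < ⟪v₁, x⟫) :
    JoinedIn (Wset v₀ v₁ ε) x (‖x + u‖⁻¹ • (x + u)) := by
  obtain ⟨hN2, hN1⟩ := norm_add_unit_orthog hx hu hxu
  have hN : (0:ℝ) < ‖x + u‖ := by linarith
  have hzu : x + u ≠ 0 := by
    intro h; rw [h, norm_zero] at hN1; linarith
  have hy : ‖(‖x + u‖⁻¹ • (x + u))‖ = 1 := norm_smul_inv_norm hzu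
  have hv₀y : ⟪v₀, ‖x + u‖⁻¹ • (x + u)⟫ = ‖x + u‖⁻¹ * ⟪v₀, x⟫ := by
    rw [real_inner_smul_right, inner_add_right, h0u, add_zero]
  have hv₁y : ⟪v₁, ‖x + u‖⁻¹ • (x + u)⟫ = ‖x + u‖⁻¹ * ⟪v₁, x⟫ := by
    rw [real_inner_smul_right, inner_add_right, h1u, add_zero]
  have hxy : ⟪x, ‖x + u‖⁻¹ • (x + u)⟫ = ‖x + u‖⁻¹ := by
    rw [real_inner_smul_right, inner_add_right, hxu, add_zero,
      real_inner_self_eq_norm_mul_norm, hx]; ring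
  set y := ‖x + u‖⁻¹ • (x + u) with hydef
  have hNinv : 0 < ‖x + u‖⁻¹ := by positivity
  refine joinedIn_of_nseg hx hy (fun t ht => mem_Wset_of_nseg hε hx hy ht (fun hr => ?_) ?_)
  · obtain ⟨ht0, ht1⟩ := Set.mem_Icc.mp ht
    rw [hv₀y]
    -- numerator is ((1-t) + t/N) * a₀ ; r ≥ (1-t) + t/N
    have hrx : (1 - t) * 1 + t * ⟪x, y⟫ ≤ ‖nseg x y t‖ := by
      have := nseg_norm_ge (x := x) (y := y) x hx t
      rwa [nseg_inner, real_inner_self_eq_norm_mul_norm, hx, one_mul] at this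
    rw [hxy] at hrx
    rcases le_or_gt 0 (⟪v₀, x⟫) with h | h
    · nlinarith [mul_pos hε hr, mul_nonneg (mul_nonneg ht0 hNinv.le) h,
        mul_nonneg (by linarith : (0:ℝ) ≤ 1 - t) h]
    · -- a₀ < 0 : -num = ((1-t) + t/N)(-a₀) < ((1-t) + t/N) ε ≤ ε r
      have hk : (0:ℝ) < (1 - t) + t * ‖x + u‖⁻¹ := by
        rcases lt_or_ge t 1 with h' | h'
        · nlinarith
        · have : t = 1 := le_antisymm ht1 h'
          subst this; simpa using hNinv
      have hkr : (1 - t) + t * ‖x + u‖⁻¹ ≤ ‖nseg x y t‖ := by linarith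
      have : ((1 - t) + t * ‖x + u‖⁻¹) * (-⟪v₀, x⟫) < ((1 - t) + t * ‖x + u‖⁻¹) * ε :=
        mul_lt_mul_of_pos_left (by linarith) hk
      nlinarith [mul_le_mul_of_nonneg_left hkr hε.le]
  · obtain ⟨ht0, ht1⟩ := Set.mem_Icc.mp ht
    rw [hv₁y]
    have : 0 < ‖x + u‖⁻¹ * ⟪v₁, x⟫ := by positivity
    exact convex_pos ht0 ht1 ha₁ this

set_option maxHeartbeats 2000000 in
/-- main case: `v₁ ≠ -v₀`.  Every point joins to `q = unit (v₀ + v₁)`. -/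
lemma joinW [FiniteDimensional ℝ E] (hdim : 3 ≤ finrank ℝ E)
    (hv₀ : ‖v₀‖ = 1) (hv₁ : ‖v₁‖ = 1) (hε : 0 < ε) (hε1 : ε < 1)
    (hne : v₁ ≠ -v₀) :
    ∃ q ∈ Wset v₀ v₁ ε, ∀ x ∈ Wset v₀ v₁ ε, JoinedIn (Wset v₀ v₁ ε) x q := by
  have hsum : v₀ + v₁ ≠ 0 := by
    intro h; apply hne; rw [eq_neg_iff_add_eq_zero, add_comm]; exact h
  set Nq := ‖v₀ + v₁‖ with hNq
  have hNqpos : 0 < Nq := norm_pos_iff.2 hsum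
  set c : ℝ := ⟪v₀, v₁⟫ with hc
  have hNq2 : Nq ^ 2 = 2 + 2 * c := by
    rw [hNq, norm_add_sq_real, hv₀, hv₁]; ring
  have hcm1 : -1 < c := by nlinarith only [hNq2, mul_pos hNqpos hNqpos]
  have hc1 : c ≤ 1 := by
    have := real_inner_le_norm v₀ v₁; rw [hv₀, hv₁] at this; simpa using this
  set q := Nq⁻¹ • (v₀ + v₁) with hq
  have hqnorm : ‖q‖ = 1 := norm_smul_inv_norm hsum
  have hv₀q : ⟪v₀, q⟫ = Nq⁻¹ * (1 + c) := by
    rw [hq, real_inner_smul_right, inner_add_right, real_inner_self_eq_norm_mul_norm, hv₀]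
    rw [← hc]; ring
  have hv₁q : ⟪v₁, q⟫ = Nq⁻¹ * (1 + c) := by
    rw [hq, real_inner_smul_right, inner_add_right, real_inner_self_eq_norm_mul_norm, hv₁,
      real_inner_comm v₀ v₁, ← hc]
    ring
  have h1c : 0 < 1 + c := by linarith
  have hv₀qpos : 0 < ⟪v₀, q⟫ := by
    rw [hv₀q]; exact mul_pos (by positivity) h1c
  have hv₁qpos : 0 < ⟪v₁, q⟫ := by
    rw [hv₁q]; exact mul_pos (by positivity) h1c
  have hqW : q ∈ Wset v₀ v₁ ε := ⟨hqnorm, by linarith, hv₁qpos⟩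
  refine ⟨q, hqW, fun x hxW => ?_⟩
  obtain ⟨hx, ha₀, ha₁⟩ := hxW
  rcases le_or_gt 0 (⟪v₀, x⟫) with hage | halt
  · exact hopH1 hε hx hqnorm hage hv₀qpos.le ha₁ hv₁qpos
  -- a < 0 case
  have hcne1 : c < 1 := by
    rcases lt_or_ge c 1 with h | h
    · exact h
    · exfalso
      have hceq : c = 1 := le_antisymm hc1 h
      have : v₀ = v₁ := (inner_eq_one_iff_of_norm_eq_one (𝕜 := ℝ) hv₀ hv₁).1 hceq
      rw [← this] at ha₁; linarith
  set w : E := v₁ - c • v₀ with hw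
  have hv₀w : ⟪v₀, w⟫ = 0 := by
    rw [hw, inner_sub_right, real_inner_smul_right, real_inner_self_eq_norm_mul_norm, hv₀]
    rw [← hc]; ring
  have hv₁w : ⟪v₁, w⟫ = 1 - c ^ 2 := by
    rw [hw, inner_sub_right, real_inner_smul_right, real_inner_self_eq_norm_mul_norm, hv₁,
      real_inner_comm v₀ v₁, ← hc]
    ring
  have hs2 : (0:ℝ) < 1 - c ^ 2 := by nlinarith only [hcm1, hcne1]
  have hwnorm2 : ‖w‖ ^ 2 = 1 - c ^ 2 := by
    rw [hw, norm_sub_sq_real, real_inner_smul_right, norm_smul, hv₀, hv₁,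
      real_inner_comm v₀ v₁, ← hc, Real.norm_eq_abs]
    ring_nf
    rw [sq_abs]
    ring
  have hwne : w ≠ 0 := by
    intro h; rw [h, norm_zero] at hwnorm2; nlinarith only [hwnorm2, hs2]
  have hσ : 0 < ‖w‖ := norm_pos_iff.2 hwne
  set p : ℝ := ⟪x, w⟫ with hp
  have hpval : p = ⟪v₁, x⟫ - c * ⟪v₀, x⟫ := by
    rw [hp, hw, inner_sub_right, real_inner_smul_right, real_inner_comm x v₁, real_inner_comm x v₀]
  have hmw : ‖(‖w‖⁻¹ • w)‖ = 1 := norm_smul_inv_norm hwne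
  have hv₀mw : ⟪v₀, ‖w‖⁻¹ • w⟫ = 0 := by rw [real_inner_smul_right, hv₀w, mul_zero]
  have hv₁mw : 0 < ⟪v₁, ‖w‖⁻¹ • w⟫ := by
    rw [real_inner_smul_right, hv₁w]
    exact mul_pos (by positivity) hs2
  -- the key step from a starting point with negative p and positive residual
  have key : ∀ z : E, ‖z‖ = 1 → -ε < ⟪v₀, z⟫ → 0 < ⟪v₁, z⟫ → ⟪z, w⟫ < 0 →
      0 < (1 - c^2) * (1 - ⟪v₀, z⟫^2) - ⟪z, w⟫^2 →
      JoinedIn (Wset v₀ v₁ ε) z q := by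
    intro z hz ha₀' ha₁' hpneg hD
    set a : ℝ := ⟪v₀, z⟫ with ha
    set pz : ℝ := ⟪z, w⟫ with hpz
    set z' : E := z - a • v₀ - (pz / ‖w‖^2) • w with hz'
    have hv₀z' : ⟪v₀, z'⟫ = 0 := by
      rw [hz', inner_sub_right, inner_sub_right, real_inner_smul_right,
        real_inner_smul_right, real_inner_self_eq_norm_mul_norm, hv₀, hv₀w]
      rw [← ha]; ring
    have hwz' : ⟪w, z'⟫ = 0 := by
      rw [hz', inner_sub_right, inner_sub_right, real_inner_smul_right,
        real_inner_smul_right, real_inner_comm z w, ← hpz, real_inner_comm v₀ w, hv₀w,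
        real_inner_self_eq_norm_mul_norm]
      field_simp
      ring
    have hzz' : ⟪z, z'⟫ = 1 - a^2 - pz^2/‖w‖^2 := by
      rw [hz', inner_sub_right, inner_sub_right, real_inner_smul_right,
        real_inner_smul_right, real_inner_self_eq_norm_mul_norm, hz,
        real_inner_comm v₀ z, ← ha, ← hpz]
      field_simp
    have hρ2 : 0 < 1 - a^2 - pz^2/‖w‖^2 := by
      rw [hwnorm2]
      have : pz^2/(1-c^2) < 1 - a^2 := (div_lt_iff₀ hs2).2 (by nlinarith only [hD])
      linarith
    have hpzne : pz ≠ 0 := ne_of_lt hpneg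
    set t₀ : ℝ := (1 - a^2 - pz^2/‖w‖^2)/(-pz) with ht₀
    have ht₀pos : 0 < t₀ := div_pos hρ2 (by linarith)
    set μ : E := t₀ • w + z' with hμ
    have hv₀μ : ⟪v₀, μ⟫ = 0 := by
      rw [hμ, inner_add_right, real_inner_smul_right, hv₀w, hv₀z']; ring
    have hv₁μ : 0 < ⟪v₁, μ⟫ := by
      have hv₁z' : ⟪v₁, z'⟫ = 0 := by
        rw [hz', inner_sub_right, inner_sub_right, real_inner_smul_right,
          real_inner_smul_right, hv₁w, real_inner_comm z v₁]
        have hzv₁ : ⟪z, v₁⟫ = pz + c * a := by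
          rw [hpz, hw, inner_sub_right, real_inner_smul_right, real_inner_comm v₀ z, ← ha]
          ring
        rw [hzv₁, real_inner_comm v₀ v₁, ← hc]
        field_simp
        rw [hwnorm2]
        ring
      rw [hμ, inner_add_right, real_inner_smul_right, hv₁w, hv₁z', add_zero]
      exact mul_pos ht₀pos hs2
    have hzμ : ⟪z, μ⟫ = 0 := by
      rw [hμ, inner_add_right, real_inner_smul_right, ← hpz, hzz', ht₀]
      field_simp
      ring
    have hμne : μ ≠ 0 := by
      intro h; rw [h, inner_zero_right] at hv₁μ; exact lt_irrefl 0 hv₁μ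
    have hmn : ‖(‖μ‖⁻¹ • μ)‖ = 1 := norm_smul_inv_norm hμne
    have hv₀m : ⟪v₀, ‖μ‖⁻¹ • μ⟫ = 0 := by rw [real_inner_smul_right, hv₀μ, mul_zero]
    have hv₁m : 0 < ⟪v₁, ‖μ‖⁻¹ • μ⟫ := by
      rw [real_inner_smul_right]
      exact mul_pos (inv_pos.2 (norm_pos_iff.2 hμne)) hv₁μ
    have hzm : ⟪z, ‖μ‖⁻¹ • μ⟫ = 0 := by rw [real_inner_smul_right, hzμ, mul_zero]
    exact (hopH2a hε hz hmn ha₀' hv₀m.ge ha₁' hv₁m hzm.ge).trans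
      (hopH1 hε hmn hqnorm hv₀m.ge hv₀qpos.le hv₁m hv₁qpos)
  rcases le_or_gt 0 p with hpge | hplt
  · -- p ≥ 0 : go via unit w
    have hxm : 0 ≤ ⟪x, ‖w‖⁻¹ • w⟫ := by
      rw [real_inner_smul_right, ← hp]
      exact mul_nonneg (by positivity) hpge
    exact (hopH2a hε hx hmw ha₀ hv₀mw.ge ha₁ hv₁mw hxm).trans
      (hopH1 hε hmw hqnorm hv₀mw.ge hv₀qpos.le hv₁mw hv₁qpos)
  · rcases lt_or_ge 0 ((1 - c^2) * (1 - ⟪v₀, x⟫^2) - p^2) with hD | hD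
    · exact key x hx ha₀ ha₁ hplt hD
    · -- degenerate : x lies in the span of v₀ and w ; bridge first
      obtain ⟨u, hu, hv₀u, hv₁u⟩ := exists_unit_orthog hdim v₀ v₁
      have hwu : ⟪w, u⟫ = 0 := by
        rw [hw, inner_sub_left, real_inner_smul_left, hv₀u, hv₁u]; ring
      have hxu : ⟪x, u⟫ = 0 := by
        set x' : E := x - (⟪v₀, x⟫) • v₀ - (p / ‖w‖^2) • w with hx'
        have hv₀x' : ⟪v₀, x'⟫ = 0 := by
          rw [hx', inner_sub_right, inner_sub_right, real_inner_smul_right,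
            real_inner_smul_right, real_inner_self_eq_norm_mul_norm, hv₀, hv₀w]
          ring_nf
        have hwx' : ⟪w, x'⟫ = 0 := by
          rw [hx', inner_sub_right, inner_sub_right, real_inner_smul_right,
            real_inner_smul_right, real_inner_comm x w, ← hp, real_inner_comm v₀ w, hv₀w,
            real_inner_self_eq_norm_mul_norm]
          field_simp
          ring
        have hxx' : ⟪x, x'⟫ = 1 - ⟪v₀, x⟫^2 - p^2/‖w‖^2 := by
          rw [hx', inner_sub_right, inner_sub_right, real_inner_smul_right,
            real_inner_smul_right, real_inner_self_eq_norm_mul_norm, hx,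
            real_inner_comm v₀ x, ← hp]
          field_simp
        have hx'0 : x' = 0 := by
          have hexp : ‖x'‖^2 = ⟪x', x'⟫ := (real_inner_self_eq_norm_sq x').symm
          have hinxx : ⟪x', x'⟫ = ⟪x, x'⟫ - (⟪v₀, x⟫) * ⟪v₀, x'⟫ - (p / ‖w‖^2) * ⟪w, x'⟫ := by
            conv_lhs => rw [hx']
            rw [inner_sub_left, inner_sub_left, real_inner_smul_left, real_inner_smul_left]
          have hple : 1 - ⟪v₀, x⟫^2 - p^2/‖w‖^2 ≤ 0 := by
            rw [hwnorm2]
            have : 1 - ⟪v₀, x⟫^2 ≤ p^2/(1-c^2) := (le_div_iff₀ hs2).2 (by nlinarith only [hD])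
            linarith
          have hn2 : ‖x'‖^2 ≤ 0 := by
            rw [hexp, hinxx, hv₀x', hwx', hxx']; linarith
          have hn0 : ‖x'‖ = 0 := le_antisymm (by nlinarith only [norm_nonneg x', hn2]) (norm_nonneg x')
          exact norm_eq_zero.1 hn0
        have hxeq : x = (⟪v₀, x⟫) • v₀ + (p / ‖w‖^2) • w := by
          have h9 : x - ((⟪v₀, x⟫) • v₀ + (p / ‖w‖^2) • w) = 0 := by
            rw [← sub_sub, ← hx']; exact hx'0
          exact sub_eq_zero.1 h9
        rw [hxeq, inner_add_left, real_inner_smul_left, real_inner_smul_left, hv₀u, hwu]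
        ring
      have hjoin1 := hopH2b (v₀ := v₀) (v₁ := v₁) hε hx hu hxu hv₀u hv₁u ha₀ ha₁
      -- properties of the bridged point
      obtain ⟨hN2, hN1⟩ := norm_add_unit_orthog hx hu hxu
      have hNpos : (0:ℝ) < ‖x + u‖ := by linarith
      have hxune : x + u ≠ 0 := by intro h; rw [h, norm_zero] at hN1; linarith
      set x₁ : E := ‖x + u‖⁻¹ • (x + u) with hx₁
      have hx₁n : ‖x₁‖ = 1 := norm_smul_inv_norm hxune
      have hinv1 : ‖x + u‖⁻¹ < 1 := by
        rw [inv_lt_one_iff₀]; right; exact hN1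
      have hinvpos : 0 < ‖x + u‖⁻¹ := by positivity
      have hv₀x₁ : ⟪v₀, x₁⟫ = ‖x + u‖⁻¹ * ⟪v₀, x⟫ := by
        rw [hx₁, real_inner_smul_right, inner_add_right, hv₀u, add_zero]
      have hv₁x₁ : ⟪v₁, x₁⟫ = ‖x + u‖⁻¹ * ⟪v₁, x⟫ := by
        rw [hx₁, real_inner_smul_right, inner_add_right, hv₁u, add_zero]
      have hwx₁ : ⟪x₁, w⟫ = ‖x + u‖⁻¹ * p := by
        rw [hx₁, real_inner_smul_left, inner_add_left, real_inner_comm w u, hwu, add_zero, ← hp]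
      have ha₀x₁ : -ε < ⟪v₀, x₁⟫ := by
        rw [hv₀x₁]
        have h1 : 1 * ⟪v₀, x⟫ < ‖x + u‖⁻¹ * ⟪v₀, x⟫ := mul_lt_mul_of_neg_right hinv1 halt
        linarith
      have ha₁x₁ : 0 < ⟪v₁, x₁⟫ := by
        rw [hv₁x₁]; exact mul_pos hinvpos ha₁
      have hpx₁ : ⟪x₁, w⟫ < 0 := by
        rw [hwx₁]
        exact mul_neg_of_pos_of_neg hinvpos hplt
      have hDx₁ : 0 < (1 - c^2) * (1 - ⟪v₀, x₁⟫^2) - ⟪x₁, w⟫^2 := by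
        rw [hv₀x₁, hwx₁]
        have hinv2 : (‖x + u‖⁻¹)^2 = 1/2 := by
          rw [← hN2]; field_simp
        have hp2 : p^2 ≤ 1 - c^2 := by
          have habs : |p| ≤ ‖x‖ * ‖w‖ := by rw [hp]; exact abs_real_inner_le_norm x w
          rw [hx, one_mul] at habs
          have h2 := pow_le_pow_left₀ (abs_nonneg p) habs 2
          rw [sq_abs] at h2
          rw [hwnorm2] at h2
          exact h2
        have ha2 : ⟪v₀, x⟫^2 < 1 := by
          have hm1 : -1 < ⟪v₀, x⟫ := by linarith
          nlinarith only [hm1, halt]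
        have expand : (1 - c^2) * (1 - (‖x + u‖⁻¹ * ⟪v₀, x⟫)^2) - (‖x + u‖⁻¹ * p)^2
            = (1 - c^2) - ((1 - c^2) * ⟪v₀, x⟫^2 + p^2) * (1/2) := by
          rw [mul_pow, mul_pow, hinv2]; ring
        rw [expand]
        have h3 : (1 - c^2) * ⟪v₀, x⟫^2 < (1 - c^2) * 1 := mul_lt_mul_of_pos_left ha2 hs2
        linarith
      exact hjoin1.trans (key x₁ hx₁n ha₀x₁ ha₁x₁ hpx₁ hDx₁)

section Band

variable {v₀ : E} {ε : ℝ}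

/-- latitude chord : both points at latitude `-ε/2`, acute angle -/
lemma bandHop2 (hε : 0 < ε) {x y : E} (hx : ‖x‖ = 1) (hy : ‖y‖ = 1)
    (hax : ⟪v₀, x⟫ = -(ε/2)) (hay : ⟪v₀, y⟫ = -(ε/2)) (hγ : 0 < ⟪x, y⟫) :
    JoinedIn (Wset v₀ (-v₀) ε) x y := by
  refine joinedIn_of_nseg hx hy (fun t ht => mem_Wset_of_nseg hε hx hy ht (fun hr => ?_) ?_)
  · obtain ⟨ht0, ht1⟩ := Set.mem_Icc.mp ht
    have hr2 : ‖nseg x y t‖^2 = (1-t)^2 + t^2 + 2*t*(1-t)*⟪x, y⟫ := nseg_norm_sq hx hy t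
    have hrhalf : 1/2 < ‖nseg x y t‖ := by
      have h12 : (1:ℝ)/2 ≤ (1-t)^2 + t^2 := by nlinarith [sq_nonneg (1 - 2*t)]
      have hcross : 0 ≤ 2*t*(1-t)*⟪x, y⟫ :=
        mul_nonneg (mul_nonneg (by linarith) (by linarith)) hγ.le
      nlinarith only [hr2, h12, hcross, norm_nonneg (nseg x y t)]
    rw [hax, hay]
    have h5 : ε * (1/2) < ε * ‖nseg x y t‖ := mul_lt_mul_of_pos_left hrhalf hε
    have h6 : (1-t) * -(ε/2) + t * -(ε/2) = -(ε * (1/2)) := by ring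
    rw [h6]
    linarith only [h5]
  · obtain ⟨ht0, ht1⟩ := Set.mem_Icc.mp ht
    rw [inner_neg_left, inner_neg_left, hax, hay]
    have : (1-t) * -(-(ε/2)) + t * -(-(ε/2)) = ε/2 := by ring
    rw [this]
    linarith

/-- stage 1 : from any point of the band to its projection at latitude `-ε/2` -/
lemma bandHop1 (hε : 0 < ε) (hε1 : ε < 1) (hv₀ : ‖v₀‖ = 1) {x : E} (hx : ‖x‖ = 1)
    (ha₀ : -ε < ⟪v₀, x⟫) (ha₁ : ⟪v₀, x⟫ < 0) :
    ∃ y : E, (∃ g : E, ‖g‖ = 1 ∧ ⟪v₀, g⟫ = 0 ∧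
        y = (-(ε/2)) • v₀ + (Real.sqrt (1 - ε^2/4)) • g) ∧
      JoinedIn (Wset v₀ (-v₀) ε) x y := by
  set a : ℝ := ⟪v₀, x⟫ with ha
  set lam : ℝ := Real.sqrt (1 - ε^2/4) with hlam
  have hlamsq : lam^2 = 1 - ε^2/4 := Real.sq_sqrt (by nlinarith only [hε, hε1])
  have hlampos : 0 < lam := Real.sqrt_pos.2 (by nlinarith only [hε, hε1])
  set xT : E := x - a • v₀ with hxT
  have hv₀xT : ⟪v₀, xT⟫ = 0 := by
    rw [hxT, inner_sub_right, real_inner_smul_right, real_inner_self_eq_norm_mul_norm, hv₀, ← ha]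
    ring
  have hxTsq : ‖xT‖^2 = 1 - a^2 := by
    rw [hxT, norm_sub_sq_real, real_inner_smul_right, norm_smul,
      hv₀, hx, real_inner_comm v₀ x, ← ha, Real.norm_eq_abs]
    ring_nf
    rw [sq_abs]
    ring
  have ha2 : a^2 < 1 := by nlinarith only [ha₀, ha₁, hε1]
  have hρpos : 0 < ‖xT‖ := by
    rcases (norm_nonneg xT).lt_or_eq with h | h
    · exact h
    · exfalso; rw [← h] at hxTsq; nlinarith only [hxTsq, ha2]
  have hxTne : xT ≠ 0 := by
    intro h; rw [h, norm_zero] at hρpos; exact lt_irrefl _ hρpos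
  set ρ : ℝ := ‖xT‖ with hρ
  set g : E := ρ⁻¹ • xT with hg
  have hgn : ‖g‖ = 1 := norm_smul_inv_norm hxTne
  have hv₀g : ⟪v₀, g⟫ = 0 := by rw [hg, real_inner_smul_right, hv₀xT, mul_zero]
  set y : E := (-(ε/2)) • v₀ + lam • g with hy
  have hv₀y : ⟪v₀, y⟫ = -(ε/2) := by
    rw [hy, inner_add_right, real_inner_smul_right, real_inner_smul_right,
      real_inner_self_eq_norm_mul_norm, hv₀, hv₀g]
    ring
  have hyn : ‖y‖ = 1 := by
    have h2 : ‖y‖^2 = 1 := by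
      rw [hy, norm_add_sq_real, real_inner_smul_right, real_inner_smul_left, norm_smul,
        norm_smul, hv₀g, hgn, hv₀, Real.norm_eq_abs, Real.norm_eq_abs]
      rw [abs_of_pos hlampos, abs_of_neg (by linarith : -(ε/2) < (0:ℝ))]
      linear_combination hlamsq
    nlinarith only [h2, norm_nonneg y, sq_nonneg (‖y‖ - 1)]
  have hxg : ⟪x, g⟫ = ρ := by
    rw [hg, real_inner_smul_right]
    have : ⟪x, xT⟫ = 1 - a^2 := by
      rw [hxT, inner_sub_right, real_inner_smul_right, real_inner_self_eq_norm_mul_norm, hx,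
        real_inner_comm v₀ x, ← ha]
      ring
    rw [this, ← hxTsq]
    rw [pow_two, ← mul_assoc, inv_mul_cancel₀ hρpos.ne', one_mul]
  have hxy : ⟪x, y⟫ = a * (-(ε/2)) + lam * ρ := by
    rw [hy, inner_add_right, real_inner_smul_right, real_inner_smul_right, hxg,
      real_inner_comm v₀ x, ← ha]
    ring
  refine ⟨y, ⟨g, hgn, hv₀g, by rw [hy]⟩, ?_⟩
  -- the chord
  set A : ℝ := max (-a) (ε/2) with hA
  have hA1 : -a ≤ A := le_max_left _ _
  have hA2 : ε/2 ≤ A := le_max_right _ _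
  have hAε : A < ε := max_lt (by linarith) (by linarith)
  have hApos : 0 < A := lt_of_lt_of_le (by linarith) hA2
  have hρB : 1 - A^2 ≤ ρ^2 := by
    rw [hρ, hxTsq]; nlinarith only [hA1, ha₁, hApos]
  have hlamB : 1 - A^2 ≤ lam^2 := by rw [hlamsq]; nlinarith only [hA2, hε]
  refine joinedIn_of_nseg hx hyn (fun t ht => mem_Wset_of_nseg hε hx hyn ht (fun hr => ?_) ?_)
  · obtain ⟨ht0, ht1⟩ := Set.mem_Icc.mp ht
    rw [hv₀y, ← ha]
    have hr2 : ‖nseg x y t‖^2 = ((1-t)*a + t*(-(ε/2)))^2 + ((1-t)*ρ + t*lam)^2 := by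
      rw [nseg_norm_sq hx hyn t, hxy]
      linear_combination (-(1-t)^2) * hxTsq - t^2 * hlamsq
    have hαub : (1-t)*a + t*(-(ε/2)) ≤ 0 := by
      have e1 : (1-t)*a ≤ 0 := mul_nonpos_of_nonneg_of_nonpos (by linarith) ha₁.le
      have e2 : t*(-(ε/2)) ≤ 0 := mul_nonpos_of_nonneg_of_nonpos ht0 (by linarith)
      linarith only [e1, e2]
    have hαlb : -A ≤ (1-t)*a + t*(-(ε/2)) := by
      have e3 : (1-t)*(-A) ≤ (1-t)*a := mul_le_mul_of_nonneg_left (by linarith only [hA1]) (by linarith)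
      have e4 : t*(-A) ≤ t*(-(ε/2)) := mul_le_mul_of_nonneg_left (by linarith only [hA2]) ht0
      nlinarith only [e3, e4]
    have hβsq : 1 - A^2 ≤ ((1-t)*ρ + t*lam)^2 := by
      rcases le_total ρ lam with hcc | hcc
      · have e5 : ρ ≤ (1-t)*ρ + t*lam := by nlinarith only [ht0, ht1, hcc]
        nlinarith only [e5, hρB, norm_nonneg xT, hρ]
      · have e5 : lam ≤ (1-t)*ρ + t*lam := by nlinarith only [ht0, ht1, hcc]
        nlinarith only [e5, hlamB, hlampos]
    have hα2 : ((1-t)*a + t*(-(ε/2)))^2 ≤ A^2 := by nlinarith only [hαub, hαlb, hApos]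
    have hεA : A^2 < ε^2 := by nlinarith only [hAε, hApos]
    have e6 : ((1-t)*a + t*(-(ε/2)))^2*(1-ε^2) ≤ A^2*(1-ε^2) :=
      mul_le_mul_of_nonneg_right hα2 (by nlinarith only [hε, hε1])
    have e5 : ε^2*(1-A^2) ≤ ε^2*((1-t)*ρ + t*lam)^2 :=
      mul_le_mul_of_nonneg_left hβsq (sq_nonneg ε)
    have e7 : ε^2*‖nseg x y t‖^2 = ε^2*((1-t)*a + t*(-(ε/2)))^2 + ε^2*((1-t)*ρ + t*lam)^2 := by
      linear_combination ε^2 * hr2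
    have hkey : ((1-t)*a + t*(-(ε/2)))^2 < ε^2*‖nseg x y t‖^2 := by
      nlinarith only [e5, e6, e7, hεA]
    nlinarith only [hkey, hαub, mul_pos hε hr]
  · obtain ⟨ht0, ht1⟩ := Set.mem_Icc.mp ht
    rw [inner_neg_left, inner_neg_left, hv₀y, ← ha]
    have h1 : 0 < (1-t) * (-a) + t * (ε/2) :=
      convex_pos ht0 ht1 (by linarith) (by linarith)
    linarith [h1]

end Band

set_option maxHeartbeats 1000000 in
/-- band case : `v₁ = -v₀`. -/
lemma joinB [FiniteDimensional ℝ E] (hdim : 3 ≤ finrank ℝ E) (hv₀ : ‖v₀‖ = 1)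
    (hε : 0 < ε) (hε1 : ε < 1) :
    ∃ q ∈ Wset v₀ (-v₀) ε, ∀ x ∈ Wset v₀ (-v₀) ε, JoinedIn (Wset v₀ (-v₀) ε) x q := by
  set lam : ℝ := Real.sqrt (1 - ε^2/4) with hlam
  have hlamsq : lam^2 = 1 - ε^2/4 := Real.sq_sqrt (by nlinarith only [hε, hε1])
  have hlampos : 0 < lam := Real.sqrt_pos.2 (by nlinarith only [hε, hε1])
  have mkv₀ : ∀ g : E, ⟪v₀, g⟫ = 0 → ⟪v₀, (-(ε/2)) • v₀ + lam • g⟫ = -(ε/2) := by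
    intro g hg0
    rw [inner_add_right, real_inner_smul_right, real_inner_smul_right,
      real_inner_self_eq_norm_mul_norm, hv₀, hg0]
    ring
  have mknorm : ∀ g : E, ‖g‖ = 1 → ⟪v₀, g⟫ = 0 → ‖(-(ε/2)) • v₀ + lam • g‖ = 1 := by
    intro g hgn hg0
    have h2 : ‖(-(ε/2)) • v₀ + lam • g‖^2 = 1 := by
      rw [norm_add_sq_real, real_inner_smul_right, real_inner_smul_left, norm_smul,
        norm_smul, hg0, hgn, hv₀, Real.norm_eq_abs, Real.norm_eq_abs]
      rw [abs_of_pos hlampos, abs_of_neg (by linarith : -(ε/2) < (0:ℝ))]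
      linear_combination hlamsq
    nlinarith only [h2, norm_nonneg ((-(ε/2)) • v₀ + lam • g), sq_nonneg (‖(-(ε/2)) • v₀ + lam • g‖ - 1)]
  have mkmem : ∀ g : E, ‖g‖ = 1 → ⟪v₀, g⟫ = 0 →
      ((-(ε/2)) • v₀ + lam • g) ∈ Wset v₀ (-v₀) ε := by
    intro g hgn hg0
    refine ⟨mknorm g hgn hg0, ?_, ?_⟩
    · rw [mkv₀ g hg0]; linarith
    · rw [inner_neg_left, mkv₀ g hg0]; linarith
  have mkinner : ∀ g h : E, ⟪v₀, g⟫ = 0 → ⟪v₀, h⟫ = 0 →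
      ⟪(-(ε/2)) • v₀ + lam • g, (-(ε/2)) • v₀ + lam • h⟫ = ε^2/4 + lam^2 * ⟪g, h⟫ := by
    intro g h hg0 hh0
    have hg0' : ⟪g, v₀⟫ = 0 := (real_inner_comm v₀ g).trans hg0
    rw [inner_add_right, inner_add_left, inner_add_left, real_inner_smul_left,
      real_inner_smul_left, real_inner_smul_left, real_inner_smul_left,
      real_inner_smul_right, real_inner_smul_right, real_inner_smul_right,
      real_inner_smul_right, real_inner_self_eq_norm_mul_norm, hv₀, hg0', hh0]
    ring
  obtain ⟨y₀, hy₀n, hv₀y₀, -⟩ := exists_unit_orthog hdim v₀ v₀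
  refine ⟨(-(ε/2)) • v₀ + lam • y₀, mkmem y₀ hy₀n hv₀y₀, fun x hxW => ?_⟩
  obtain ⟨hx, ha₀, ha₁⟩ := hxW
  have ha₁' : ⟪v₀, x⟫ < 0 := by
    rw [inner_neg_left] at ha₁; linarith
  obtain ⟨y, ⟨g, hgn, hv₀g, hyeq⟩, hjoin⟩ := bandHop1 hε hε1 hv₀ hx ha₀ ha₁'
  have hyq : JoinedIn (Wset v₀ (-v₀) ε) y ((-(ε/2)) • v₀ + lam • y₀) := by
    rw [hyeq]
    by_cases hcase : g + y₀ = 0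
    · -- g = -y₀ : go through a perpendicular direction
      obtain ⟨u, hun, hv₀u, hgu⟩ := exists_unit_orthog hdim v₀ g
      have hy₀g : y₀ = -g := by
        have : y₀ = -g + (g + y₀) := by abel
        rw [this, hcase, add_zero]
      have hop1 : JoinedIn (Wset v₀ (-v₀) ε) ((-(ε/2)) • v₀ + lam • g)
          ((-(ε/2)) • v₀ + lam • u) := by
        apply bandHop2 hε (mknorm g hgn hv₀g) (mknorm u hun hv₀u)
          (mkv₀ g hv₀g) (mkv₀ u hv₀u)
        rw [mkinner g u hv₀g hv₀u, hgu]
        nlinarith only [hε]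
      have hop2 : JoinedIn (Wset v₀ (-v₀) ε) ((-(ε/2)) • v₀ + lam • u)
          ((-(ε/2)) • v₀ + lam • y₀) := by
        apply bandHop2 hε (mknorm u hun hv₀u) (mknorm y₀ hy₀n hv₀y₀)
          (mkv₀ u hv₀u) (mkv₀ y₀ hv₀y₀)
        rw [mkinner u y₀ hv₀u hv₀y₀, hy₀g, inner_neg_right, real_inner_comm g u, hgu]
        nlinarith only [hε]
      exact hop1.trans hop2
    · -- generic : go through the normalized midpoint
      set gmid : E := ‖g + y₀‖⁻¹ • (g + y₀) with hgmid
      have hgmidn : ‖gmid‖ = 1 := norm_smul_inv_norm hcase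
      have hNpos : 0 < ‖g + y₀‖ := norm_pos_iff.2 hcase
      have hv₀gmid : ⟪v₀, gmid⟫ = 0 := by
        rw [hgmid, real_inner_smul_right, inner_add_right, hv₀g, hv₀y₀]; ring
      have hinner1 : 0 ≤ ⟪g, gmid⟫ := by
        rw [hgmid, real_inner_smul_right, inner_add_right, real_inner_self_eq_norm_mul_norm, hgn]
        have hcs : -1 ≤ ⟪g, y₀⟫ := by
          have := abs_real_inner_le_norm g y₀
          rw [hgn, hy₀n, one_mul] at this
          exact neg_le_of_abs_le this
        have : (0:ℝ) ≤ 1 * 1 + ⟪g, y₀⟫ := by linarith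
        positivity
      have hinner2 : 0 ≤ ⟪gmid, y₀⟫ := by
        rw [hgmid, real_inner_smul_left, inner_add_left, real_inner_self_eq_norm_mul_norm, hy₀n]
        have hcs : -1 ≤ ⟪g, y₀⟫ := by
          have := abs_real_inner_le_norm g y₀
          rw [hgn, hy₀n, one_mul] at this
          exact neg_le_of_abs_le this
        have : (0:ℝ) ≤ ⟪g, y₀⟫ + 1 * 1 := by linarith
        positivity
      have hop1 : JoinedIn (Wset v₀ (-v₀) ε) ((-(ε/2)) • v₀ + lam • g)
          ((-(ε/2)) • v₀ + lam • gmid) := by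
        apply bandHop2 hε (mknorm g hgn hv₀g) (mknorm gmid hgmidn hv₀gmid)
          (mkv₀ g hv₀g) (mkv₀ gmid hv₀gmid)
        rw [mkinner g gmid hv₀g hv₀gmid]
        nlinarith only [hε, hinner1, hlamsq, mul_nonneg (sq_nonneg lam) hinner1]
      have hop2 : JoinedIn (Wset v₀ (-v₀) ε) ((-(ε/2)) • v₀ + lam • gmid)
          ((-(ε/2)) • v₀ + lam • y₀) := by
        apply bandHop2 hε (mknorm gmid hgmidn hv₀gmid) (mknorm y₀ hy₀n hv₀y₀)
          (mkv₀ gmid hv₀gmid) (mkv₀ y₀ hv₀y₀)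
        rw [mkinner gmid y₀ hv₀gmid hv₀y₀]
        nlinarith only [hε, hinner2, mul_nonneg (sq_nonneg lam) hinner2]
      exact hop1.trans hop2
  exact hjoin.trans hyq

/-- the thickened cap ∩ hemisphere is path-connected -/
lemma isPathConnected_Wset [FiniteDimensional ℝ E] (hdim : 3 ≤ finrank ℝ E)
    {v₀ v₁ : E} (hv₀ : ‖v₀‖ = 1) (hv₁ : ‖v₁‖ = 1) {ε : ℝ} (hε : 0 < ε) (hε1 : ε < 1) :
    IsPathConnected (Wset v₀ v₁ ε) := by
  by_cases hcase : v₁ = -v₀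
  · subst hcase
    obtain ⟨q, hq, h⟩ := joinB (v₀ := v₀) (ε := ε) hdim hv₀ hε hε1
    exact ⟨q, hq, fun y hy => (h y hy).symm⟩
  · obtain ⟨q, hq, h⟩ := joinW hdim hv₀ hv₁ hε hε1 hcase
    exact ⟨q, hq, fun y hy => (h y hy).symm⟩

/-- a common point of the two thickened lune pieces -/
lemma exists_common_point [FiniteDimensional ℝ E] (hdim : 3 ≤ finrank ℝ E)
    {v₀ v₁ v₂ : E} (hv₀ : ‖v₀‖ = 1) (hv₁ : ‖v₁‖ = 1) (hv₂ : ‖v₂‖ = 1)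
    (hna : v₂ ≠ -v₁) {ε : ℝ} (hε : 0 < ε) (hε1 : ε < 1) :
    ((Wset v₀ v₁ ε) ∩ (Wset v₀ v₂ ε)).Nonempty := by
  obtain ⟨e₀, he₀n, he₀1, he₀2⟩ := exists_unit_orthog hdim v₁ v₂
  obtain ⟨e, hen, he1, he2, he0⟩ : ∃ e : E, ‖e‖ = 1 ∧ ⟪v₁, e⟫ = 0 ∧ ⟪v₂, e⟫ = 0 ∧
      0 ≤ ⟪v₀, e⟫ := by
    rcases le_total 0 (⟪v₀, e₀⟫) with h | h
    · exact ⟨e₀, he₀n, he₀1, he₀2, h⟩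
    · refine ⟨-e₀, by rw [norm_neg]; exact he₀n, by rw [inner_neg_right, he₀1, neg_zero],
        by rw [inner_neg_right, he₀2, neg_zero], by rw [inner_neg_right]; linarith⟩
  have hsumne : v₁ + v₂ ≠ 0 := by
    intro h; apply hna
    rw [eq_neg_iff_add_eq_zero, add_comm]; exact h
  have hd : -1 < ⟪v₁, v₂⟫ := by
    have h2 : ‖v₁ + v₂‖^2 = 2 + 2*⟪v₁, v₂⟫ := by
      rw [norm_add_sq_real, hv₁, hv₂]; ring
    have := norm_pos_iff.2 hsumne
    nlinarith only [h2, this]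
  set t : ℝ := ε/8 with ht
  set z : E := e + t • (v₁ + v₂) with hz
  have hwnorm : ‖v₁ + v₂‖ ≤ 2 := by
    calc ‖v₁ + v₂‖ ≤ ‖v₁‖ + ‖v₂‖ := norm_add_le _ _
    _ = 2 := by rw [hv₁, hv₂]; ring
  have htpos : 0 < t := by rw [ht]; linarith
  have hNlb : 1 - 2*t ≤ ‖z‖ := by
    have h1 : ‖e‖ - ‖t • (v₁ + v₂)‖ ≤ ‖z‖ := by
      have he' : ‖e‖ ≤ ‖z‖ + ‖t • (v₁ + v₂)‖ := by
        calc ‖e‖ = ‖z + -(t • (v₁ + v₂))‖ := by rw [hz]; congr 1; abel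
        _ ≤ ‖z‖ + ‖-(t • (v₁ + v₂))‖ := norm_add_le _ _
        _ = ‖z‖ + ‖t • (v₁ + v₂)‖ := by rw [norm_neg]
      linarith
    have h2 : ‖t • (v₁ + v₂)‖ ≤ 2*t := by
      rw [norm_smul, Real.norm_eq_abs, abs_of_pos htpos]
      nlinarith only [hwnorm, htpos]
    rw [hen] at h1
    linarith
  have hNpos : 0 < ‖z‖ := by
    have : (0:ℝ) < 1 - 2*t := by rw [ht]; linarith
    linarith
  have hzne : z ≠ 0 := by
    intro h; rw [h, norm_zero] at hNpos; exact lt_irrefl _ hNpos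
  have hinv : 0 < ‖z‖⁻¹ := inv_pos.2 hNpos
  refine ⟨‖z‖⁻¹ • z, ?_, ?_⟩
  · refine ⟨norm_smul_inv_norm hzne, ?_, ?_⟩
    · rw [real_inner_smul_right, hz, inner_add_right, real_inner_smul_right]
      have hb : |⟪v₀, v₁ + v₂⟫| ≤ 2 := by
        have := abs_real_inner_le_norm v₀ (v₁ + v₂)
        rw [hv₀, one_mul] at this
        linarith
      have hlow : ⟪v₀, e⟫ + t * ⟪v₀, v₁ + v₂⟫ ≥ -(2*t) := by
        have := neg_le_of_abs_le hb
        nlinarith only [he0, htpos, this]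
      have hr1 : ‖z‖ ≤ 1 + 2*t := by
        have h1 : ‖z‖ ≤ ‖e‖ + ‖t • (v₁ + v₂)‖ := norm_add_le _ _
        have h2 : ‖t • (v₁ + v₂)‖ ≤ 2*t := by
          rw [norm_smul, Real.norm_eq_abs, abs_of_pos htpos]
          nlinarith only [hwnorm, htpos]
        rw [hen] at h1; linarith
      -- need :  -ε < ‖z‖⁻¹ * (...)
      rw [show (-ε : ℝ) = -ε * 1 by ring]
      have key : -ε * ‖z‖ < ⟪v₀, e⟫ + t * ⟪v₀, v₁ + v₂⟫ := by
        have hεN : ε * (1 - 2*t) ≤ ε * ‖z‖ := mul_le_mul_of_nonneg_left hNlb hε.le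
        have : 2*t < ε * (1 - 2*t) := by rw [ht]; nlinarith only [hε, hε1]
        nlinarith only [hlow, hεN, this]
      calc -ε * 1 = (-ε * ‖z‖) * ‖z‖⁻¹ + (-ε) * (1 - ‖z‖ * ‖z‖⁻¹) := by ring
      _ = (-ε * ‖z‖) * ‖z‖⁻¹ := by rw [mul_inv_cancel₀ hNpos.ne']; ring
      _ < (⟪v₀, e⟫ + t * ⟪v₀, v₁ + v₂⟫) * ‖z‖⁻¹ := by
          exact mul_lt_mul_of_pos_right key hinv
      _ = ‖z‖⁻¹ * (⟪v₀, e⟫ + t * ⟪v₀, v₁ + v₂⟫) := by ring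
    · rw [real_inner_smul_right, hz, inner_add_right, real_inner_smul_right, he1,
        inner_add_right, real_inner_self_eq_norm_mul_norm, hv₁]
      have : 0 < t * (1 * 1 + ⟪v₁, v₂⟫) := mul_pos htpos (by linarith)
      have h0 : (0:ℝ) + t * (1 * 1 + ⟪v₁, v₂⟫) > 0 := by linarith
      exact mul_pos hinv h0
  · refine ⟨norm_smul_inv_norm hzne, ?_, ?_⟩
    · rw [real_inner_smul_right, hz, inner_add_right, real_inner_smul_right]
      have hb : |⟪v₀, v₁ + v₂⟫| ≤ 2 := by
        have := abs_real_inner_le_norm v₀ (v₁ + v₂)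
        rw [hv₀, one_mul] at this
        linarith
      have hlow : ⟪v₀, e⟫ + t * ⟪v₀, v₁ + v₂⟫ ≥ -(2*t) := by
        have := neg_le_of_abs_le hb
        nlinarith only [he0, htpos, this]
      rw [show (-ε : ℝ) = -ε * 1 by ring]
      have key : -ε * ‖z‖ < ⟪v₀, e⟫ + t * ⟪v₀, v₁ + v₂⟫ := by
        have hεN : ε * (1 - 2*t) ≤ ε * ‖z‖ := mul_le_mul_of_nonneg_left hNlb hε.le
        have : 2*t < ε * (1 - 2*t) := by rw [ht]; nlinarith only [hε, hε1]
        nlinarith only [hlow, hεN, this]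
      calc -ε * 1 = (-ε * ‖z‖) * ‖z‖⁻¹ + (-ε) * (1 - ‖z‖ * ‖z‖⁻¹) := by ring
      _ = (-ε * ‖z‖) * ‖z‖⁻¹ := by rw [mul_inv_cancel₀ hNpos.ne']; ring
      _ < (⟪v₀, e⟫ + t * ⟪v₀, v₁ + v₂⟫) * ‖z‖⁻¹ := mul_lt_mul_of_pos_right key hinv
      _ = ‖z‖⁻¹ * (⟪v₀, e⟫ + t * ⟪v₀, v₁ + v₂⟫) := by ring
    · rw [real_inner_smul_right, hz, inner_add_right, real_inner_smul_right, he2,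
        inner_add_right, real_inner_self_eq_norm_mul_norm, hv₂, real_inner_comm v₁ v₂]
      have h0 : (0:ℝ) + t * (⟪v₁, v₂⟫ + 1 * 1) > 0 := by
        have : 0 < t * (⟪v₁, v₂⟫ + 1 * 1) := mul_pos htpos (by linarith)
        linarith
      exact mul_pos hinv h0

set_option maxHeartbeats 1000000 in
/-- Let `H₀, H₁, H₂` be open hemispheres of `Sⁿ` (`n ≥ 2`), defined by unit-norm
functionals, with `H₁` and `H₂` not antipodal. If `H₀ ∩ (H₁ ∪ H₂)` is not connected,
then for all sufficiently small `ε > 0`, `H₀^ε ∩ (H₁ ∪ H₂)` is connected, where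
`H₀^ε = {ℓ₀ > -ε}`. -/
theorem thickened_union_connected (n : ℕ) (hn : 2 ≤ n)
    (ℓ₀ ℓ₁ ℓ₂ : EuclideanSpace ℝ (Fin (n + 1)) →L[ℝ] ℝ)
    (h₀ : ‖ℓ₀‖ = 1) (h₁ : ‖ℓ₁‖ = 1) (h₂ : ‖ℓ₂‖ = 1)
    (hna : ℓ₂ ≠ -ℓ₁)
    (hdisc : ¬ IsConnected
      ({x | x ∈ Metric.sphere (0 : EuclideanSpace ℝ (Fin (n + 1))) 1 ∧ ℓ₀ x > 0} ∩
        ({x | x ∈ Metric.sphere (0 : EuclideanSpace ℝ (Fin (n + 1))) 1 ∧ ℓ₁ x > 0} ∪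
          {x | x ∈ Metric.sphere (0 : EuclideanSpace ℝ (Fin (n + 1))) 1 ∧ ℓ₂ x > 0}))) :
    ∃ ε₀ > 0, ∀ ε : ℝ, 0 < ε → ε < ε₀ →
      IsConnected
        ({x | x ∈ Metric.sphere (0 : EuclideanSpace ℝ (Fin (n + 1))) 1 ∧ ℓ₀ x > -ε} ∩
          ({x | x ∈ Metric.sphere (0 : EuclideanSpace ℝ (Fin (n + 1))) 1 ∧ ℓ₁ x > 0} ∪
            {x | x ∈ Metric.sphere (0 : EuclideanSpace ℝ (Fin (n + 1))) 1 ∧ ℓ₂ x > 0})) := by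
  have hdim : 3 ≤ Module.finrank ℝ (EuclideanSpace ℝ (Fin (n + 1))) := by
    rw [finrank_euclideanSpace_fin]
    omega
  set E := EuclideanSpace ℝ (Fin (n + 1))
  set v₀ : E := (InnerProductSpace.toDual ℝ E).symm ℓ₀ with hv₀def
  set v₁ : E := (InnerProductSpace.toDual ℝ E).symm ℓ₁ with hv₁def
  set v₂ : E := (InnerProductSpace.toDual ℝ E).symm ℓ₂ with hv₂def
  have hv₀ : ‖v₀‖ = 1 := by rw [hv₀def, LinearIsometryEquiv.norm_map]; exact h₀
  have hv₁ : ‖v₁‖ = 1 := by rw [hv₁def, LinearIsometryEquiv.norm_map]; exact h₁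
  have hv₂ : ‖v₂‖ = 1 := by rw [hv₂def, LinearIsometryEquiv.norm_map]; exact h₂
  have hl₀ : ∀ x : E, ℓ₀ x = ⟪v₀, x⟫ := fun x =>
    (InnerProductSpace.toDual_symm_apply (𝕜 := ℝ)).symm
  have hl₁ : ∀ x : E, ℓ₁ x = ⟪v₁, x⟫ := fun x =>
    (InnerProductSpace.toDual_symm_apply (𝕜 := ℝ)).symm
  have hl₂ : ∀ x : E, ℓ₂ x = ⟪v₂, x⟫ := fun x =>
    (InnerProductSpace.toDual_symm_apply (𝕜 := ℝ)).symm
  have hne : v₂ ≠ -v₁ := by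
    intro h
    apply hna
    have := congrArg (InnerProductSpace.toDual ℝ E) h
    rw [hv₂def, hv₁def, LinearIsometryEquiv.apply_symm_apply, map_neg,
      LinearIsometryEquiv.apply_symm_apply] at this
    exact this
  refine ⟨1, one_pos, fun ε hε hε1 => ?_⟩
  have hset : ({x | x ∈ Metric.sphere (0 : E) 1 ∧ ℓ₀ x > -ε} ∩
      ({x | x ∈ Metric.sphere (0 : E) 1 ∧ ℓ₁ x > 0} ∪
        {x | x ∈ Metric.sphere (0 : E) 1 ∧ ℓ₂ x > 0}))
      = Wset v₀ v₁ ε ∪ Wset v₀ v₂ ε := by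
    ext x
    simp only [Set.mem_inter_iff, Set.mem_union, Set.mem_setOf_eq,
      mem_sphere_zero_iff_norm, Wset, hl₀ x, hl₁ x, hl₂ x, gt_iff_lt]
    tauto
  rw [hset]
  have hc₁ : IsConnected (Wset v₀ v₁ ε) :=
    (isPathConnected_Wset hdim hv₀ hv₁ hε hε1).isConnected
  have hc₂ : IsConnected (Wset v₀ v₂ ε) :=
    (isPathConnected_Wset hdim hv₀ hv₂ hε hε1).isConnected
  exact IsConnected.union (exists_common_point hdim hv₀ hv₁ hv₂ hne hε hε1) hc₁ hc₂
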